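/- Let X₁, …, Xₙ be i.i.d. random variables, each exponentially distributed with rate parameter λ > 0 (representing the interarrival times of a Poisson process with arrival rate λ). Define the estimator λ̂ = n / (∑_{i=1}^n Xᵢ). Then for every ε ∈ (0,1), the probability Pr{ |λ̂ − λ| / λ < ε } equals g(n, n/(1+ε)) − g(n, n/(1−ε)), where g(m, x) = e^{−x} ∑_{i=0}^{m−1} xⁱ/i!. -/

import Mathlib

open MeasureTheory ProbabilityTheory
open scoped ENNReal

/-- `g m x = e^{-x} ∑_{i=0}^{m-1} x^i / i!`. -/
noncomputable def g (m : ℕ) (x : ℝ) : ℝ :=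
  Real.exp (-x) * ∑ i ∈ Finset.range m, x ^ i / (Nat.factorial i)


lemma conv_withDensity (f gg : ℝ → ℝ≥0∞) (hf : Measurable f) (hg : Measurable gg) :
    (volume.withDensity f).conv (volume.withDensity gg)
      = volume.withDensity (fun t => ∫⁻ x, f x * gg (t - x)) := by
  have haddmeas : Measurable (fun p : ℝ × ℝ => p.1 + p.2) := measurable_add
  ext s hs
  have hpre : MeasurableSet ((fun p : ℝ × ℝ => p.1 + p.2) ⁻¹' s) := haddmeas hs
  rw [Measure.conv, Measure.map_apply haddmeas hs, withDensity_apply _ hs,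
    Measure.prod_apply hpre]
  have hind : Measurable (s.indicator (fun _ => (1:ℝ≥0∞))) := measurable_one.indicator hs
  have slice : ∀ x : ℝ, (volume.withDensity gg) (Prod.mk x ⁻¹' ((fun p : ℝ × ℝ => p.1 + p.2) ⁻¹' s))
      = ∫⁻ y, s.indicator (fun _ => (1:ℝ≥0∞)) (x + y) * gg y := by
    intro x
    have hms : MeasurableSet (Prod.mk x ⁻¹' ((fun p : ℝ × ℝ => p.1 + p.2) ⁻¹' s)) :=
      measurable_prodMk_left hpre
    rw [withDensity_apply _ hms, ← lintegral_indicator hms _]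
    congr 1
    funext y
    by_cases h : x + y ∈ s <;>
      simp [Set.indicator, h, Set.mem_preimage]
  simp_rw [slice]
  have hmeasInner : Measurable fun x => ∫⁻ y, s.indicator (fun _ => (1:ℝ≥0∞)) (x + y) * gg y := by
    apply Measurable.lintegral_prod_right (f := fun x y => s.indicator (fun _ => (1:ℝ≥0∞)) (x + y) * gg y)
    exact ((hind.comp haddmeas).mul (hg.comp measurable_snd))
  rw [lintegral_withDensity_eq_lintegral_mul _ hf hmeasInner]
  have inner : ∀ x : ℝ, (∫⁻ y, s.indicator (fun _ => (1:ℝ≥0∞)) (x + y) * gg y)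
      = ∫⁻ t, s.indicator (fun _ => (1:ℝ≥0∞)) t * gg (t - x) := by
    intro x
    have hF : Measurable fun t => s.indicator (fun _ => (1:ℝ≥0∞)) t * gg (t - x) :=
      hind.mul (hg.comp (measurable_id.sub measurable_const))
    have := (measurePreserving_add_right volume x).lintegral_comp hF
    simp only [add_sub_cancel_right] at this
    rw [← this]
    congr 1; funext y; rw [add_comm]
  simp only [Pi.mul_apply]
  simp_rw [inner]
  have swap : ∫⁻ x, f x * ∫⁻ t, s.indicator (fun _ => (1:ℝ≥0∞)) t * gg (t - x)
      = ∫⁻ t, ∫⁻ x, f x * (s.indicator (fun _ => (1:ℝ≥0∞)) t * gg (t - x)) := by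
    rw [← lintegral_lintegral_swap]
    · congr 1; funext x
      exact (lintegral_const_mul _
        (hind.mul (hg.comp ((measurable_id.sub measurable_const) : Measurable fun t : ℝ => t - x)))).symm
    · exact ((hf.comp measurable_fst).mul ((hind.comp measurable_snd).mul
        (hg.comp (measurable_snd.sub measurable_fst)))).aemeasurable
  rw [swap]
  rw [← lintegral_indicator hs _]
  congr 1
  funext t
  by_cases h : t ∈ s
  · simp [Set.indicator_of_mem h]
  · simp [Set.indicator_of_notMem h]



lemma g_succ (m : ℕ) (x : ℝ) :
    g (m + 1) x = g m x + Real.exp (-x) * (x ^ m / Nat.factorial m) := by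
  simp [g, Finset.sum_range_succ, mul_add]

lemma hasDerivAt_g (m : ℕ) (y : ℝ) :
    HasDerivAt (fun y => g (m + 1) y) (-(Real.exp (-y) * y ^ m / Nat.factorial m)) y := by
  induction m with
  | zero =>
    have h : HasDerivAt (fun y : ℝ => Real.exp (-y)) (-Real.exp (-y)) y := by
      simpa using (hasDerivAt_neg y).exp
    have : (fun y : ℝ => g 1 y) = fun y : ℝ => Real.exp (-y) := by
      funext z; simp [g]
    rw [this]
    simpa using h
  | succ m ih =>
    have hexp : HasDerivAt (fun y : ℝ => Real.exp (-y)) (-Real.exp (-y)) y := by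
      simpa using (hasDerivAt_neg y).exp
    have hpow : HasDerivAt (fun y : ℝ => y ^ (m + 1) / Nat.factorial (m + 1))
        (((m : ℝ) + 1) * y ^ m / Nat.factorial (m + 1)) y := by
      simpa [Nat.cast_add] using (hasDerivAt_pow (m + 1) y).div_const (Nat.factorial (m + 1))
    have hmul := hexp.mul hpow
    have hsum := ih.add hmul
    have heq : (fun y => g (m + 2) y)
        = fun y => g (m + 1) y + Real.exp (-y) * (y ^ (m + 1) / Nat.factorial (m + 1)) := by
      funext z; exact g_succ (m + 1) z
    rw [heq]
    refine hsum.congr_deriv ?_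
    have hfac : (Nat.factorial (m + 1) : ℝ) = ((m : ℝ) + 1) * Nat.factorial m := by
      push_cast [Nat.factorial_succ]; ring
    field_simp [hfac]
    push_cast [Nat.factorial_succ]; ring

lemma integral_gamma_pdf (m : ℕ) (lam : ℝ) (hlam : 0 < lam) (a b : ℝ) :
    ∫ x in a..b, lam ^ (m + 1) / Nat.factorial m * x ^ m * Real.exp (-(lam * x))
      = g (m + 1) (lam * a) - g (m + 1) (lam * b) := by
  have key : ∀ x : ℝ, HasDerivAt (fun x => -g (m + 1) (lam * x))
      (lam ^ (m + 1) / Nat.factorial m * x ^ m * Real.exp (-(lam * x))) x := by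
    intro x
    have h1 : HasDerivAt (fun x : ℝ => lam * x) lam x := by
      simpa using (hasDerivAt_id x).const_mul lam
    have h2 := ((hasDerivAt_g m (lam * x)).comp x h1).neg
    refine h2.congr_deriv ?_
    have : Real.exp (-(lam * x)) * (lam * x) ^ m = Real.exp (-(lam * x)) * (lam ^ m * x ^ m) := by
      rw [mul_pow]
    field_simp
    ring
  rw [intervalIntegral.integral_eq_sub_of_hasDerivAt (fun x _ => key x)]
  · ring
  · apply Continuous.intervalIntegrable
    continuity


lemma gamma_conv_pdf (m : ℕ) (lam : ℝ) (hlam : 0 < lam) (t : ℝ) :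
    ∫⁻ x, gammaPDF ((m : ℝ) + 1) lam x * gammaPDF 1 lam (t - x)
      = gammaPDF ((m : ℝ) + 2) lam t := by
  rcases lt_or_ge t 0 with ht | ht
  · have hzero : ∀ x : ℝ, gammaPDF ((m : ℝ) + 1) lam x * gammaPDF 1 lam (t - x) = 0 := by
      intro x
      rcases lt_or_ge x 0 with hx | hx
      · rw [gammaPDF_of_neg hx, zero_mul]
      · rw [gammaPDF_of_neg (show t - x < 0 by linarith), mul_zero]
    simp only [hzero, lintegral_zero]
    rw [gammaPDF_of_neg ht]
  · set c : ℝ := lam ^ (m + 2) / Nat.factorial m * Real.exp (-(lam * t)) with hc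
    have hcnn : 0 ≤ c := by positivity
    have hkey : (fun x => gammaPDF ((m : ℝ) + 1) lam x * gammaPDF 1 lam (t - x))
        = (Set.Icc 0 t).indicator (fun x => ENNReal.ofReal (c * x ^ m)) := by
      funext x
      rcases lt_or_ge x 0 with hx | hx
      · rw [gammaPDF_of_neg hx, zero_mul,
          Set.indicator_of_notMem (by simp [Set.mem_Icc]; intro h; linarith)]
      · rcases le_or_gt x t with hxt | hxt
        · rw [Set.indicator_of_mem (Set.mem_Icc.2 ⟨hx, hxt⟩)]
          rw [gammaPDF_of_nonneg hx, gammaPDF_of_nonneg (by linarith : (0:ℝ) ≤ t - x)]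
          rw [← ENNReal.ofReal_mul (by positivity)]
          congr 1
          have h1 : lam ^ ((m : ℝ) + 1) = lam ^ (m + 1 : ℕ) := by
            rw [← Real.rpow_natCast lam (m + 1)]; push_cast; ring_nf
          have h2 : x ^ ((m : ℝ) + 1 - 1) = x ^ (m : ℕ) := by
            rw [← Real.rpow_natCast x m]; norm_num
          have h3 : (t - x) ^ ((1 : ℝ) - 1) = 1 := by norm_num
          have h4 : Real.Gamma ((m : ℝ) + 1) = Nat.factorial m := by
            exact_mod_cast Real.Gamma_nat_eq_factorial m
          rw [h1, h2, h3, h4, Real.Gamma_one, Real.rpow_one, hc]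
          rw [show -(lam * t) = -(lam * x) + -(lam * (t - x)) by ring, Real.exp_add]
          field_simp
          ring
        · rw [gammaPDF_of_neg (by linarith : t - x < 0), mul_zero,
            Set.indicator_of_notMem (by simp [Set.mem_Icc]; intro h; linarith)]
    rw [hkey, lintegral_indicator measurableSet_Icc _]
    have hint : IntegrableOn (fun x : ℝ => c * x ^ m) (Set.Icc 0 t) := by
      apply Continuous.integrableOn_Icc; continuity
    rw [← ofReal_integral_eq_lintegral_ofReal hint]
    · have : ∫ x in Set.Icc 0 t, c * x ^ m = c * (t ^ (m + 1) / (m + 1)) := by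
        rw [MeasureTheory.integral_Icc_eq_integral_Ioc, ← intervalIntegral.integral_of_le ht,
          intervalIntegral.integral_const_mul, integral_pow]
        norm_num
      rw [this, gammaPDF_of_nonneg ht]
      congr 1
      have h1 : lam ^ ((m : ℝ) + 2) = lam ^ (m + 2 : ℕ) := by
        rw [← Real.rpow_natCast lam (m + 2)]; push_cast; ring_nf
      have h2 : t ^ ((m : ℝ) + 2 - 1) = t ^ (m + 1 : ℕ) := by
        rw [← Real.rpow_natCast t (m + 1)]; push_cast; ring_nf
      have h4 : Real.Gamma ((m : ℝ) + 2) = Nat.factorial (m + 1) := by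
        have := Real.Gamma_nat_eq_factorial (m + 1)
        push_cast at this ⊢; convert this using 2; ring
      rw [h1, h2, h4, hc]
      have hfac : (Nat.factorial (m + 1) : ℝ) = ((m : ℝ) + 1) * Nat.factorial m := by
        push_cast [Nat.factorial_succ]; ring
      field_simp [hfac]
      push_cast [Nat.factorial_succ]; ring
    · refine (ae_restrict_iff' measurableSet_Icc).2 (ae_of_all _ fun x hx => ?_)
      have h0 := hx.1
      positivity


lemma measurable_gammaPDF (a r : ℝ) : Measurable (gammaPDF a r) :=
  ENNReal.measurable_ofReal.comp (measurable_gammaPDFReal a r)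

lemma gammaMeasure_conv (m : ℕ) (lam : ℝ) (hlam : 0 < lam) :
    (gammaMeasure ((m : ℝ) + 1) lam).conv (gammaMeasure 1 lam)
      = gammaMeasure ((m : ℝ) + 2) lam := by
  rw [gammaMeasure, gammaMeasure, gammaMeasure,
    conv_withDensity _ _ (measurable_gammaPDF _ _) (measurable_gammaPDF _ _)]
  congr 1
  funext t
  exact gamma_conv_pdf m lam hlam t

lemma map_add_conv {Ω : Type*} [MeasureSpace Ω] [IsProbabilityMeasure (ℙ : Measure Ω)]
    {X Y : Ω → ℝ} (hX : Measurable X) (hY : Measurable Y) (h : IndepFun X Y ℙ) :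
    Measure.map (X + Y) ℙ = (Measure.map X ℙ).conv (Measure.map Y ℙ) := by
  rw [Measure.conv, ← (indepFun_iff_map_prod_eq_prod_map_map hX.aemeasurable hY.aemeasurable).1 h,
    Measure.map_map measurable_add (hX.prodMk hY)]
  rfl

lemma map_sum_eq_gamma {Ω : Type*} [MeasureSpace Ω] [IsProbabilityMeasure (ℙ : Measure Ω)]
    {ι : Type*} (lam : ℝ) (hlam : 0 < lam) (X : ι → Ω → ℝ) (hmeas : ∀ i, Measurable (X i))
    (hindep : iIndepFun X ℙ)
    (hdist : ∀ i, Measure.map (X i) ℙ = expMeasure lam)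
    (s : Finset ι) (hs : s.Nonempty) :
    Measure.map (∑ i ∈ s, X i) ℙ = gammaMeasure (s.card) lam := by
  induction hs using Finset.Nonempty.cons_induction with
  | singleton a => simpa [expMeasure] using hdist a
  | cons a s ha hs ih =>
    obtain ⟨m, hm⟩ : ∃ m, s.card = m + 1 := ⟨s.card - 1, (Nat.succ_pred_eq_of_pos hs.card_pos).symm⟩
    have hsum_meas : Measurable (∑ j ∈ s, X j) := by
      convert Finset.measurable_sum s (fun i _ => hmeas i) using 1
      funext ω; simp
    have hIndep : IndepFun (X a) (∑ j ∈ s, X j) ℙ :=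
      (hindep.indepFun_finsetSum_of_notMem hmeas ha).symm
    haveI : IsProbabilityMeasure (expMeasure lam) := isProbabilityMeasure_expMeasure hlam
    haveI : IsProbabilityMeasure (gammaMeasure (s.card : ℝ) lam) :=
      isProbabilityMeasure_gammaMeasure (by exact_mod_cast Nat.cast_pos.2 hs.card_pos) hlam
    rw [Finset.sum_cons, map_add_conv (hmeas a) hsum_meas hIndep, hdist a, ih,
      Measure.conv_comm, expMeasure, hm]
    have := gammaMeasure_conv m lam hlam
    rw [Finset.card_cons, hm]
    push_cast
    push_cast at this
    convert this using 2 <;> (push_cast; ring)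




/-- If `X₁, …, Xₙ` are i.i.d. exponential with rate `λ > 0` (interarrival times of a
Poisson process with arrival rate `λ`) and `λ̂ = n / ∑ Xᵢ`, then for every `ε ∈ (0,1)`,
`Pr{|λ̂ - λ|/λ < ε} = g(n, n/(1+ε)) - g(n, n/(1-ε))`. -/
theorem arrival_rate_estimate_prob_eq
    {Ω : Type*} [MeasureSpace Ω] [IsProbabilityMeasure (ℙ : Measure Ω)]
    (n : ℕ) (hn : 0 < n) (lam : ℝ) (hlam : 0 < lam)
    (X : Fin n → Ω → ℝ) (hmeas : ∀ i, Measurable (X i))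
    (hindep : iIndepFun X ℙ)
    (hdist : ∀ i, Measure.map (X i) ℙ = expMeasure lam)
    (ε : ℝ) (hε : ε ∈ Set.Ioo (0 : ℝ) 1) :
    (ℙ {ω | |(n : ℝ) / (∑ i, X i ω) - lam| / lam < ε}).toReal
      = g n ((n : ℝ) / (1 + ε)) - g n ((n : ℝ) / (1 - ε)) := by
  obtain ⟨hε0, hε1⟩ := hε
  obtain ⟨m, rfl⟩ : ∃ m, n = m + 1 := ⟨n - 1, (Nat.succ_pred_eq_of_pos hn).symm⟩
  have hn' : (0 : ℝ) < ((m + 1 : ℕ) : ℝ) := by exact_mod_cast hn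
  have h1pos : 0 < lam * (1 + ε) := by nlinarith
  have h2pos : 0 < lam * (1 - ε) := by nlinarith
  set a : ℝ := ((m + 1 : ℕ) : ℝ) / (lam * (1 + ε)) with ha
  set b : ℝ := ((m + 1 : ℕ) : ℝ) / (lam * (1 - ε)) with hb
  have ha0 : 0 < a := div_pos hn' h1pos
  have hab : a < b := by
    rw [ha, hb]
    apply div_lt_div_of_pos_left hn' h2pos
    nlinarith
  set S : Ω → ℝ := fun ω => ∑ i, X i ω with hS
  have hSmeas : Measurable S := Finset.measurable_sum _ (fun i _ => hmeas i)
  have hmap : Measure.map S ℙ = gammaMeasure ((m + 1 : ℕ) : ℝ) lam := by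
    have hne : (Finset.univ : Finset (Fin (m + 1))).Nonempty := ⟨⟨0, hn⟩, Finset.mem_univ _⟩
    have := map_sum_eq_gamma lam hlam X hmeas hindep hdist Finset.univ hne
    rw [Finset.card_univ, Fintype.card_fin] at this
    rw [← this]
    congr 1
    funext ω
    simp [hS]
  have hsetEq : {ω | |((m + 1 : ℕ) : ℝ) / (∑ i, X i ω) - lam| / lam < ε}
      = S ⁻¹' Set.Ioo a b := by
    ext ω
    simp only [Set.mem_setOf_eq, Set.mem_preimage, Set.mem_Ioo]
    set s := S ω with hs'
    rw [div_lt_iff₀ hlam, abs_lt]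
    have hpe : lam * (1 + ε) = lam + ε * lam := by ring
    have hqe : lam * (1 - ε) = lam - ε * lam := by ring
    constructor
    · rintro ⟨hlo, hhi⟩
      have hs : 0 < s := by
        by_contra hsc
        push_neg at hsc
        have hns : ((m + 1 : ℕ) : ℝ) / s ≤ 0 := div_nonpos_of_nonneg_of_nonpos hn'.le hsc
        linarith
      constructor
      · rw [ha, div_lt_iff₀ h1pos]
        have h := (div_lt_iff₀ hs).1
          (show ((m + 1 : ℕ) : ℝ) / s < lam * (1 + ε) by linarith)
        have hc := mul_comm (lam * (1 + ε)) s
        linarith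
      · rw [hb, lt_div_iff₀ h2pos]
        have h := (lt_div_iff₀ hs).1
          (show lam * (1 - ε) < ((m + 1 : ℕ) : ℝ) / s by linarith)
        have hc := mul_comm (lam * (1 - ε)) s
        linarith
    · rintro ⟨hlo, hhi⟩
      have hs : 0 < s := lt_trans ha0 hlo
      rw [ha, div_lt_iff₀ h1pos] at hlo
      rw [hb, lt_div_iff₀ h2pos] at hhi
      have c1 := mul_comm s (lam * (1 + ε))
      have c2 := mul_comm s (lam * (1 - ε))
      have g1 : ((m + 1 : ℕ) : ℝ) / s < lam * (1 + ε) := (div_lt_iff₀ hs).2 (by linarith)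
      have g2 : lam * (1 - ε) < ((m + 1 : ℕ) : ℝ) / s := (lt_div_iff₀ hs).2 (by linarith)
      constructor <;> linarith
  rw [hsetEq, ← Measure.map_apply hSmeas measurableSet_Ioo, hmap,
    gammaMeasure, withDensity_apply _ measurableSet_Ioo]
  set F : ℝ → ℝ := fun x => lam ^ (m + 1) / Nat.factorial m * x ^ m * Real.exp (-(lam * x))
    with hF
  have hpdf : ∀ x ∈ Set.Ioo a b, gammaPDF ((m + 1 : ℕ) : ℝ) lam x = ENNReal.ofReal (F x) := by
    intro x hx
    have hx0 : (0 : ℝ) ≤ x := le_of_lt (lt_trans ha0 hx.1)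
    rw [gammaPDF_of_nonneg hx0]
    congr 1
    have h1 : lam ^ (((m + 1 : ℕ) : ℕ) : ℝ) = lam ^ (m + 1 : ℕ) := Real.rpow_natCast lam (m + 1)
    have h2 : x ^ ((((m + 1 : ℕ) : ℕ) : ℝ) - 1) = x ^ (m : ℕ) := by
      rw [← Real.rpow_natCast x m]; push_cast; ring_nf
    have h4 : Real.Gamma (((m + 1 : ℕ) : ℕ) : ℝ) = Nat.factorial m := by
      have := Real.Gamma_nat_eq_factorial m
      push_cast at this ⊢
      convert this using 2
    rw [h1, h2, h4, hF]
  rw [setLIntegral_congr_fun measurableSet_Ioo hpdf]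
  have hint : IntegrableOn F (Set.Ioo a b) :=
    (Continuous.integrableOn_Icc (by rw [hF]; continuity)).mono_set Set.Ioo_subset_Icc_self
  rw [← ofReal_integral_eq_lintegral_ofReal hint]
  · have hIoo : ∫ x in Set.Ioo a b, F x = ∫ x in a..b, F x := by
      rw [intervalIntegral.integral_of_le hab.le, MeasureTheory.integral_Ioc_eq_integral_Ioo]
    have hftc := integral_gamma_pdf m lam hlam a b
    have hnn : 0 ≤ ∫ x in Set.Ioo a b, F x := by
      apply setIntegral_nonneg measurableSet_Ioo
      intro x hx
      have hx0 : (0 : ℝ) ≤ x := le_of_lt (lt_trans ha0 hx.1)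
      rw [hF]; positivity
    rw [ENNReal.toReal_ofReal hnn, hIoo, hF, hftc]
    have hne1 : (1 : ℝ) + ε ≠ 0 := by positivity
    have hne2 : (1 : ℝ) - ε ≠ 0 := by nlinarith
    have e1 : lam * a = ((m + 1 : ℕ) : ℝ) / (1 + ε) := by
      rw [ha]; field_simp
    have e2 : lam * b = ((m + 1 : ℕ) : ℝ) / (1 - ε) := by
      rw [hb]; field_simp
    rw [e1, e2]
  · refine (ae_restrict_iff' measurableSet_Ioo).2 (ae_of_all _ fun x hx => ?_)
    have hx0 : (0 : ℝ) ≤ x := le_of_lt (lt_trans ha0 hx.1)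
    rw [hF]; positivity
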